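/- arXiv:2411.00362 — 6 statements merged into one kernel-verified Lean document; each statement's English description precedes it below -/
import Mathlib

section
/- Define R(v_h) = argmin{J(v) : v ∈ V, P_0 v = v_h} and R_h(v_h) = argmin{J_0(v) : v ∈ V, P_0 v = v_h}, where J_0(v) = (1/2)a(v,v). Then for every v_h ∈ V_h, R(v_h) - R_h(v_h) = R_f(f), where R_f(f) = argmin{J(v) : v ∈ V_f}; in particular the difference R(v_h) - R_h(v_h) is independent of v_h. -/
private lemma aux_lin_zero (L Q : ℝ) (hQ : 0 ≤ Q)
    (h : ∀ t : ℝ, 0 ≤ t * L + t ^ 2 * Q) : L = 0 := by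
  rcases hQ.eq_or_lt with h0 | h0
  · have h1 := h 1
    have h2 := h (-1)
    nlinarith
  · have h1 := h (-L / (2 * Q))
    have h2 : (-L / (2 * Q)) * L + (-L / (2 * Q)) ^ 2 * Q = -L ^ 2 / (4 * Q) := by
      field_simp; ring
    rw [h2] at h1
    have h4 : (0:ℝ) < 4 * Q := by linarith
    have h5 : 0 ≤ -L ^ 2 := by
      have h6 := mul_nonneg h1 h4.le
      rwa [div_mul_cancel₀ _ (ne_of_gt h4)] at h6
    have h7 : L ^ 2 = 0 := le_antisymm (by linarith) (sq_nonneg L)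
    exact pow_eq_zero_iff (n := 2) (by norm_num) |>.mp h7

/-- With `R(v_h)` the constrained minimizer of `J` and `R_h(v_h)` the
constrained minimizer of `J₀(v) = (1/2) a(v,v)`, and `R_f(f)` the minimizer of `J`
over `V_f`, one has `R(v_h) - R_h(v_h) = R_f(f)` for every `v_h ∈ V_h`; in particular
the difference is independent of `v_h`. -/
theorem stmt2
    {V : Type*} [NormedAddCommGroup V] [InnerProductSpace ℝ V] [CompleteSpace V]
    (a : V →ₗ[ℝ] V →ₗ[ℝ] ℝ)
    (hsymm : ∀ u v : V, a u v = a v u)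
    (M : ℝ) (hcont : ∀ u v : V, |a u v| ≤ M * ‖u‖ * ‖v‖)
    (α : ℝ) (hα : 0 < α) (hcoer : ∀ v : V, α * ‖v‖ ^ 2 ≤ a v v)
    (f : V →L[ℝ] ℝ)
    (J J0 : V → ℝ)
    (hJ : ∀ v, J v = (1 / 2) * a v v - f v)
    (hJ0 : ∀ v, J0 v = (1 / 2) * a v v)
    (Vh : Submodule ℝ V) [CompleteSpace Vh]
    (P0 : V → V) (hP0 : ∀ v, P0 v = (Vh.orthogonalProjection v : V))
    (Vf : Set V) (hVf : Vf = {v : V | P0 v = 0})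
    (R Rh : V → V) (Rff : V)
    (hR : ∀ vh ∈ Vh, P0 (R vh) = vh ∧ ∀ v : V, P0 v = vh → J (R vh) ≤ J v)
    (hRh : ∀ vh ∈ Vh, P0 (Rh vh) = vh ∧ ∀ v : V, P0 v = vh → J0 (Rh vh) ≤ J0 v)
    (hRff : Rff ∈ Vf ∧ ∀ v ∈ Vf, J Rff ≤ J v) :
    ∀ vh ∈ Vh, R vh - Rh vh = Rff := by
  intro vh hvh
  have hP0add : ∀ u v : V, P0 (u + v) = P0 u + P0 v := by
    intro u v; simp only [hP0, map_add, Submodule.coe_add]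
  have hP0sub : ∀ u v : V, P0 (u - v) = P0 u - P0 v := by
    intro u v; simp only [hP0, map_sub, Submodule.coe_sub]
  have hP0smul : ∀ (t : ℝ) (v : V), P0 (t • v) = t • P0 v := by
    intro t v; simp only [hP0, map_smul, Submodule.coe_smul]
  -- Variational characterization for a general quadratic functional
  have hvar : ∀ (g : V →L[ℝ] ℝ) (K : V → ℝ), (∀ v, K v = (1 / 2) * a v v - g v) →
      ∀ x : V, (∀ v : V, P0 v = P0 x → K x ≤ K v) →
      ∀ w : V, P0 w = 0 → a x w = g w := by
    intro g K hK x hmin w hw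
    have hQ : 0 ≤ (1 / 2) * a w w := by
      have := hcoer w
      nlinarith [sq_nonneg ‖w‖]
    have key : ∀ t : ℝ, 0 ≤ t * (a x w - g w) + t ^ 2 * ((1 / 2) * a w w) := by
      intro t
      have hc : P0 (x + t • w) = P0 x := by
        rw [hP0add, hP0smul, hw, smul_zero, add_zero]
      have hle := hmin (x + t • w) hc
      have hexp : a (x + t • w) (x + t • w)
          = a x x + 2 * t * a x w + t ^ 2 * a w w := by
        simp only [map_add, map_smul, LinearMap.add_apply, LinearMap.smul_apply,
          smul_eq_mul]
        rw [hsymm w x]; ring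
      have hf : g (x + t • w) = g x + t * g w := by
        rw [map_add, map_smul, smul_eq_mul]
      rw [hK, hK, hexp, hf] at hle
      nlinarith
    have := aux_lin_zero (a x w - g w) ((1 / 2) * a w w) hQ key
    linarith
  obtain ⟨hR1, hR2⟩ := hR vh hvh
  obtain ⟨hRh1, hRh2⟩ := hRh vh hvh
  obtain ⟨hRff1, hRff2⟩ := hRff
  rw [hVf] at hRff1
  have hRff1' : P0 Rff = 0 := hRff1
  -- variational equalities
  have eqR : ∀ w : V, P0 w = 0 → a (R vh) w = f w := by
    intro w hw
    exact hvar f J hJ (R vh) (fun v hv => hR2 v (by rw [hv, hR1])) w hw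
  have eqRh : ∀ w : V, P0 w = 0 → a (Rh vh) w = 0 := by
    intro w hw
    have := hvar (0 : V →L[ℝ] ℝ) J0 (by intro v; rw [hJ0]; simp)
      (Rh vh) (fun v hv => hRh2 v (by rw [hv, hRh1])) w hw
    simpa using this
  have eqRf : ∀ w : V, P0 w = 0 → a Rff w = f w := by
    intro w hw
    refine hvar f J hJ Rff (fun v hv => hRff2 v ?_) w hw
    rw [hVf]; rw [hRff1'] at hv; exact hv
  -- the difference
  set d : V := R vh - Rh vh - Rff with hd
  have hdP0 : P0 d = 0 := by
    rw [hd, hP0sub, hP0sub, hR1, hRh1, hRff1', sub_self, zero_sub, neg_zero]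
  have hadd : a d d = 0 := by
    have h1 := eqR d hdP0
    have h2 := eqRh d hdP0
    have h3 := eqRf d hdP0
    have : a d d = a (R vh) d - a (Rh vh) d - a Rff d := by
      rw [hd]
      simp only [map_sub, LinearMap.sub_apply]; ring
    rw [this, h1, h2, h3]; ring
  have hnorm : ‖d‖ = 0 := by
    have h1 := hcoer d
    have h2 : ‖d‖ ^ 2 ≤ 0 := by nlinarith
    have h3 : ‖d‖ ^ 2 = 0 := le_antisymm h2 (sq_nonneg _)
    exact pow_eq_zero_iff (n := 2) (by norm_num) |>.mp h3
  have hd0 : d = 0 := norm_eq_zero.mp hnorm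
  have : R vh - Rh vh - Rff = 0 := hd0
  exact sub_eq_zero.mp this
end

section
/- For every v_h ∈ V_h, J(R(v_h)) = J(R_h(v_h)) + J(R_f), where R_f = R(v_h) - R_h(v_h) ∈ V_f. Consequently, the minimizer of v_h ↦ J(R(v_h)) over V_h coincides with the minimizer of v_h ↦ J(R_h(v_h)) over V_h. -/
/-- For every `v_h ∈ V_h`, `J(R(v_h)) = J(R_h(v_h)) + J(R(v_h) - R_h(v_h))`
with `R(v_h) - R_h(v_h) ∈ V_f`; consequently the minimizer of `v_h ↦ J(R(v_h))` over `V_h`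
coincides with the minimizer of `v_h ↦ J(R_h(v_h))` over `V_h`. -/
theorem stmt4
    {V : Type*} [NormedAddCommGroup V] [InnerProductSpace ℝ V] [CompleteSpace V]
    (a : V →ₗ[ℝ] V →ₗ[ℝ] ℝ)
    (hsymm : ∀ u v : V, a u v = a v u)
    (M : ℝ) (hcont : ∀ u v : V, |a u v| ≤ M * ‖u‖ * ‖v‖)
    (α : ℝ) (hα : 0 < α) (hcoer : ∀ v : V, α * ‖v‖ ^ 2 ≤ a v v)
    (f : V →L[ℝ] ℝ)
    (J J0 : V → ℝ)
    (hJ : ∀ v, J v = (1 / 2) * a v v - f v)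
    (hJ0 : ∀ v, J0 v = (1 / 2) * a v v)
    (Vh : Submodule ℝ V) [CompleteSpace Vh]
    (P0 : V → V) (hP0 : ∀ v, P0 v = (Submodule.orthogonalProjection Vh v : V))
    (Vf : Set V) (hVf : Vf = {v : V | P0 v = 0})
    (R Rh : V → V)
    (hR : ∀ vh ∈ Vh, P0 (R vh) = vh ∧ ∀ v : V, P0 v = vh → J (R vh) ≤ J v)
    (hRh : ∀ vh ∈ Vh, P0 (Rh vh) = vh ∧ ∀ v : V, P0 v = vh → J0 (Rh vh) ≤ J0 v) :
    (∀ vh ∈ Vh, R vh - Rh vh ∈ Vf ∧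
        J (R vh) = J (Rh vh) + J (R vh - Rh vh)) ∧
    (∀ uh ∈ Vh,
      ((∀ vh ∈ Vh, J (R uh) ≤ J (R vh)) ↔ (∀ vh ∈ Vh, J (Rh uh) ≤ J (Rh vh)))) := by
  have hP0add : ∀ x y : V, P0 (x + y) = P0 x + P0 y := by
    intro x y; simp [hP0, map_add]
  have hP0smul : ∀ (t : ℝ) (x : V), P0 (t • x) = t • P0 x := by
    intro t x; simp [hP0, map_smul]
  have hP0sub : ∀ x y : V, P0 (x - y) = P0 x - P0 y := by
    intro x y; simp [hP0, map_sub]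
  -- orthogonality: a (Rh vh) w = 0 for all w with P0 w = 0
  have hortho : ∀ vh ∈ Vh, ∀ w : V, P0 w = 0 → a (Rh vh) w = 0 := by
    intro vh hvh w hw
    obtain ⟨hproj, hmin⟩ := hRh vh hvh
    have key : ∀ t : ℝ, 0 ≤ t * a (Rh vh) w + t ^ 2 / 2 * a w w := by
      intro t
      have h1 : P0 (Rh vh + t • w) = vh := by
        rw [hP0add, hP0smul, hw, smul_zero, add_zero, hproj]
      have h2 := hmin _ h1
      rw [hJ0, hJ0] at h2
      have expand : a (Rh vh + t • w) (Rh vh + t • w)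
          = a (Rh vh) (Rh vh) + 2 * t * a (Rh vh) w + t ^ 2 * a w w := by
        simp only [map_add, map_smul, LinearMap.add_apply, LinearMap.smul_apply,
          smul_eq_mul, hsymm w (Rh vh)]
        ring
      rw [expand] at h2
      linarith
    set c := a (Rh vh) w with hc
    set d := a w w with hd
    have hd0 : 0 ≤ d := le_trans (by positivity) (hcoer w)
    have hd1 : (0 : ℝ) < d + 1 := by linarith
    have h3 := key (-c / (d + 1))
    have h4 : 0 ≤ (d + 1) ^ 2 * ((-c / (d + 1)) * c + (-c / (d + 1)) ^ 2 / 2 * d) :=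
      mul_nonneg (sq_nonneg _) h3
    have h5 : (d + 1) ^ 2 * ((-c / (d + 1)) * c + (-c / (d + 1)) ^ 2 / 2 * d)
        = -(c ^ 2) * (d + 1) + c ^ 2 * d / 2 := by
      field_simp
    have hc2 : c ^ 2 ≤ 0 := by nlinarith
    have : c ^ 2 = 0 := le_antisymm hc2 (sq_nonneg c)
    exact pow_eq_zero_iff (two_ne_zero) |>.mp this
  -- additivity of J along a-orthogonal directions
  have hJadd : ∀ x w : V, a x w = 0 → J (x + w) = J x + J w := by
    intro x w hxw
    simp only [hJ]
    have hsym : a w x = 0 := (hsymm w x).trans hxw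
    have : a (x + w) (x + w) = a x x + a w w := by
      simp only [map_add, LinearMap.add_apply, hxw, hsym]
      ring
    rw [this, map_add]
    ring
  -- the decomposition
  have hsub0 : ∀ vh ∈ Vh, P0 (R vh - Rh vh) = 0 := by
    intro vh hvh
    rw [hP0sub, (hR vh hvh).1, (hRh vh hvh).1, sub_self]
  have main : ∀ vh ∈ Vh, R vh - Rh vh ∈ Vf ∧
      J (R vh) = J (Rh vh) + J (R vh - Rh vh) := by
    intro vh hvh
    have hs := hsub0 vh hvh
    refine ⟨by rw [hVf]; exact hs, ?_⟩
    have h := hJadd (Rh vh) (R vh - Rh vh) (hortho vh hvh _ hs)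
    have heq : Rh vh + (R vh - Rh vh) = R vh := by abel
    rw [heq] at h
    exact h
  -- Rf minimizes J over Vf
  have hRfmin : ∀ vh ∈ Vh, ∀ w : V, P0 w = 0 → J (R vh - Rh vh) ≤ J w := by
    intro vh hvh w hw
    obtain ⟨hpR, hminR⟩ := hR vh hvh
    obtain ⟨hpRh, _⟩ := hRh vh hvh
    have h1 : P0 (Rh vh + w) = vh := by rw [hP0add, hw, add_zero, hpRh]
    have h2 := hminR _ h1
    have h3 := hJadd (Rh vh) w (hortho vh hvh w hw)
    have h4 := (main vh hvh).2
    rw [h3] at h2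
    linarith
  -- J (Rf uh) = J (Rf vh)
  have hRfeq : ∀ uh ∈ Vh, ∀ vh ∈ Vh, J (R uh - Rh uh) = J (R vh - Rh vh) := by
    intro uh huh vh hvh
    exact le_antisymm (hRfmin uh huh _ (hsub0 vh hvh)) (hRfmin vh hvh _ (hsub0 uh huh))
  refine ⟨main, ?_⟩
  intro uh huh
  constructor
  · intro h vh hvh
    have h1 := h vh hvh
    have h2 := (main uh huh).2
    have h3 := (main vh hvh).2
    have h4 := hRfeq uh huh vh hvh
    linarith
  · intro h vh hvh
    have h1 := h vh hvh
    have h2 := (main uh huh).2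
    have h3 := (main vh hvh).2
    have h4 := hRfeq uh huh vh hvh
    linarith
end

section
/- Let u be the unique minimizer of J over V and let u_h^{ms} = R_h(u_h), where u_h minimizes v_h ↦ J(R(v_h)) over V_h. Then u - u_h^{ms} = R_f(f), i.e., the global error of the HMM approximation equals the fine-scale remainder, which lies in V_f and satisfies a(u - u_h^{ms}, w) = f(w) for all w ∈ V_f. -/
lemma quad_zero {c d : ℝ} (hd : 0 ≤ d) (h : ∀ t : ℝ, 0 ≤ c * t + d * t ^ 2) : c = 0 := by
  have h1 := h (-c / (2 * d + 1))
  have h2 : (0:ℝ) < 2 * d + 1 := by linarith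
  have : c * (-c / (2 * d + 1)) + d * (-c / (2 * d + 1)) ^ 2
      = (-(c ^ 2) * (d + 1)) / (2 * d + 1) ^ 2 := by field_simp; ring
  rw [this] at h1
  have h3 : 0 ≤ -(c ^ 2) * (d + 1) := by
    have h4 := mul_nonneg h1 (sq_nonneg (2 * d + 1))
    rwa [div_mul_cancel₀] at h4
    positivity
  nlinarith [sq_nonneg c, mul_nonneg (sq_nonneg c) hd]

/-- Let `u` be the minimizer of `J` over `V` and `u_h^ms = R_h(u_h)` where
`u_h` minimizes `v_h ↦ J(R(v_h))` over `V_h`. Then `u - u_h^ms = R_f(f)`: it lies in `V_f`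
and satisfies `a(u - u_h^ms, w) = f(w)` for all `w ∈ V_f`. -/
theorem stmt6
    {V : Type*} [NormedAddCommGroup V] [InnerProductSpace ℝ V] [CompleteSpace V]
    (a : V →ₗ[ℝ] V →ₗ[ℝ] ℝ)
    (hsymm : ∀ u v : V, a u v = a v u)
    (M : ℝ) (hcont : ∀ u v : V, |a u v| ≤ M * ‖u‖ * ‖v‖)
    (α : ℝ) (hα : 0 < α) (hcoer : ∀ v : V, α * ‖v‖ ^ 2 ≤ a v v)
    (f : V →L[ℝ] ℝ)
    (J J0 : V → ℝ)
    (hJ : ∀ v, J v = (1 / 2) * a v v - f v)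
    (hJ0 : ∀ v, J0 v = (1 / 2) * a v v)
    (Vh : Submodule ℝ V) [CompleteSpace Vh]
    (P0 : V → V) (hP0 : ∀ v, P0 v = (Vh.orthogonalProjection v : V))
    (Vf : Set V) (hVf : Vf = {v : V | P0 v = 0})
    (R Rh : V → V)
    (hR : ∀ vh ∈ Vh, P0 (R vh) = vh ∧ ∀ v : V, P0 v = vh → J (R vh) ≤ J v)
    (hRh : ∀ vh ∈ Vh, P0 (Rh vh) = vh ∧ ∀ v : V, P0 v = vh → J0 (Rh vh) ≤ J0 v)
    (Rff : V) (hRff : Rff ∈ Vf ∧ ∀ v ∈ Vf, J Rff ≤ J v)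
    (u : V) (hu : ∀ v : V, J u ≤ J v)
    (uh : V) (huh : uh ∈ Vh) (huhmin : ∀ vh ∈ Vh, J (R uh) ≤ J (R vh))
    (uhms : V) (huhms : uhms = Rh uh) :
    u - uhms ∈ Vf ∧ u - uhms = Rff ∧ ∀ w ∈ Vf, a (u - uhms) w = f w := by
  -- P0 is linear
  have hP0add : ∀ x y : V, P0 (x + y) = P0 x + P0 y := by
    intro x y; simp [hP0, map_add]
  have hP0smul : ∀ (t : ℝ) (x : V), P0 (t • x) = t • P0 x := by
    intro t x; simp [hP0, map_smul]
  have hP0sub : ∀ x y : V, P0 (x - y) = P0 x - P0 y := by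
    intro x y; simp [hP0, map_sub]
  -- expansion of a
  have hexp : ∀ (x w : V) (t : ℝ),
      a (x + t • w) (x + t • w) = a x x + (2 * a x w) * t + (a w w) * t ^ 2 := by
    intro x w t
    simp only [map_add, map_smul, LinearMap.add_apply, LinearMap.smul_apply, smul_eq_mul]
    rw [hsymm w x]; ring
  -- Euler-Lagrange for global minimizer u : a u w = f w for all w
  have hEL : ∀ w : V, a u w = f w := by
    intro w
    have key : ∀ t : ℝ, 0 ≤ (a u w - f w) * t + ((1/2) * a w w) * t ^ 2 := by
      intro t
      have := hu (u + t • w)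
      rw [hJ, hJ, hexp] at this
      simp only [map_add, map_smul, smul_eq_mul] at this
      linarith
    have hd : 0 ≤ (1/2) * a w w := by
      have h0 : (0:ℝ) ≤ a w w := le_trans (by positivity) (hcoer w)
      linarith
    have := quad_zero hd key
    linarith
  -- Vf membership facts
  have hVf0 : ∀ w ∈ Vf, P0 w = 0 := by intro w hw; rw [hVf] at hw; exact hw
  -- Rh uh properties
  have hRhuh := hRh uh huh
  -- a uhms w = 0 for w ∈ Vf
  have hms : ∀ w ∈ Vf, a uhms w = 0 := by
    intro w hw
    have key : ∀ t : ℝ, 0 ≤ (a uhms w) * t + ((1/2) * a w w) * t ^ 2 := by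
      intro t
      have hc : P0 (uhms + t • w) = uh := by
        rw [hP0add, hP0smul, hVf0 w hw, smul_zero, add_zero, huhms, hRhuh.1]
      have := hRhuh.2 (uhms + t • w) hc
      rw [← huhms] at this
      rw [hJ0, hJ0, hexp] at this
      linarith
    have hd : 0 ≤ (1/2) * a w w := by
      have h0 : (0:ℝ) ≤ a w w := le_trans (by positivity) (hcoer w)
      linarith
    exact quad_zero hd key
  -- a Rff w = f w for w ∈ Vf
  have hRffEL : ∀ w ∈ Vf, a Rff w = f w := by
    intro w hw
    have key : ∀ t : ℝ, 0 ≤ (a Rff w - f w) * t + ((1/2) * a w w) * t ^ 2 := by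
      intro t
      have hmem : Rff + t • w ∈ Vf := by
        rw [hVf]; show P0 _ = 0
        rw [hP0add, hP0smul, hVf0 w hw, hVf0 Rff hRff.1, smul_zero, add_zero]
      have := hRff.2 (Rff + t • w) hmem
      rw [hJ, hJ, hexp] at this
      simp only [map_add, map_smul, smul_eq_mul] at this
      linarith
    have hd : 0 ≤ (1/2) * a w w := by
      have h0 : (0:ℝ) ≤ a w w := le_trans (by positivity) (hcoer w)
      linarith
    have := quad_zero hd key; linarith
  -- R uh = u
  have hRuh := hR uh huh
  have hPu : P0 u ∈ Vh := by rw [hP0]; exact (Vh.orthogonalProjection u).2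
  have hJeq : J (R uh) = J u := by
    have h1 : J (R uh) ≤ J (R (P0 u)) := huhmin (P0 u) hPu
    have h2 : J (R (P0 u)) ≤ J u := (hR (P0 u) hPu).2 u rfl
    have h3 : J u ≤ J (R uh) := hu (R uh)
    linarith
  have hRuheq : R uh = u := by
    -- strict convexity
    by_contra hne
    have hmid := hu ((1/2 : ℝ) • u + (1/2 : ℝ) • (R uh))
    set v := R uh
    have hexp2 : a ((1/2 : ℝ) • u + (1/2 : ℝ) • v) ((1/2 : ℝ) • u + (1/2 : ℝ) • v)
        = (1/2) * a u u + (1/2) * a v v - (1/4) * a (u - v) (u - v) := by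
      simp only [map_add, map_smul, map_sub, LinearMap.add_apply, LinearMap.smul_apply,
        LinearMap.sub_apply, smul_eq_mul]
      rw [hsymm v u]; ring
    rw [hJ, hJ, hexp2] at hmid
    simp only [map_add, map_smul, smul_eq_mul] at hmid
    have hv : J v = J u := hJeq
    rw [hJ, hJ] at hv
    have hle : a (u - v) (u - v) ≤ 0 := by linarith
    have hc := hcoer (u - v)
    have hsq : ‖u - v‖ ^ 2 ≤ 0 := by nlinarith [sq_nonneg ‖u - v‖]
    have hn0 : ‖u - v‖ ^ 2 = 0 := le_antisymm hsq (sq_nonneg _)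
    have : u - v = 0 := norm_eq_zero.mp (by
      have := pow_eq_zero_iff (n := 2) (by norm_num) |>.mp hn0
      exact this)
    exact hne (sub_eq_zero.mp this).symm
  have hPuuh : P0 u = uh := by rw [← hRuheq]; exact hRuh.1
  -- u - uhms ∈ Vf
  have hmemVf : u - uhms ∈ Vf := by
    rw [hVf]; show P0 _ = 0
    rw [hP0sub, hPuuh, huhms, hRhuh.1, sub_self]
  -- variational equation
  have hvar : ∀ w ∈ Vf, a (u - uhms) w = f w := by
    intro w hw
    rw [map_sub, LinearMap.sub_apply, hEL w, hms w hw, sub_zero]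
  refine ⟨hmemVf, ?_, hvar⟩
  -- uniqueness: u - uhms = Rff
  set e := u - uhms with he
  have hdiff : e - Rff ∈ Vf := by
    rw [hVf]; show P0 _ = 0
    rw [hP0sub, hVf0 e hmemVf, hVf0 Rff hRff.1, sub_self]
  have h1 : a (e - Rff) (e - Rff) = a e (e - Rff) - a Rff (e - Rff) := by
    simp only [map_sub, LinearMap.sub_apply]
    rw [hsymm Rff e]
  have hzero : a (e - Rff) (e - Rff) = 0 := by
    rw [h1, hvar _ hdiff, hRffEL _ hdiff, sub_self]
  have hc := hcoer (e - Rff)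
  have hsq : ‖e - Rff‖ ^ 2 ≤ 0 := by nlinarith [sq_nonneg ‖e - Rff‖]
  have hn0 : ‖e - Rff‖ ^ 2 = 0 := le_antisymm hsq (sq_nonneg _)
  have : e - Rff = 0 := norm_eq_zero.mp (pow_eq_zero_iff (n := 2) (by norm_num) |>.mp hn0)
  exact sub_eq_zero.mp this
end

section
/- In the abstract setting, combining the previous results: if u minimizes J over V and u_h^{ms} is the HMM approximation, and if ‖v‖ ≤ C_h |||v||| holds for all v ∈ V_f with f(v) = (F, v), then |||u - u_h^{ms}||| ≤ C_h ‖F‖. -/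
/-- A quadratic `½ t² A + t c` nonnegative for all `t` (with `A ≥ 0`) forces `c = 0`. -/
lemma quad_aux (A c : ℝ) (hA : 0 ≤ A)
    (h : ∀ t : ℝ, 0 ≤ 1 / 2 * t ^ 2 * A + t * c) : c = 0 := by
  by_contra hc
  have hA1 : (0:ℝ) < A + 1 := by linarith
  have hc2 : 0 < c ^ 2 := by positivity
  set t : ℝ := -c / (A + 1) with ht
  have expand : (A + 1) ^ 2 * (1 / 2 * t ^ 2 * A + t * c)
      = 1 / 2 * c ^ 2 * A - c ^ 2 * (A + 1) := by
    rw [ht]; field_simp; ring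
  have h0 := h t
  nlinarith [mul_nonneg (le_of_lt (mul_pos hA1 hA1)) h0]

/-- If `u` minimizes `J` over `V`, `u_h^ms = R_h(u_h)` is the HMM
approximation (with `u_h` minimizing `v_h ↦ J(R_h(v_h))` over `V_h`), `f(v) = ⟪F, v⟫`,
and `‖v‖ ≤ C_h |||v|||` for all `v ∈ V_f`, then `|||u - u_h^ms||| ≤ C_h ‖F‖`. -/
theorem stmt8
    {V : Type*} [NormedAddCommGroup V] [InnerProductSpace ℝ V] [CompleteSpace V]
    (a : V →ₗ[ℝ] V →ₗ[ℝ] ℝ)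
    (hsymm : ∀ u v : V, a u v = a v u)
    (M : ℝ) (hcont : ∀ u v : V, |a u v| ≤ M * ‖u‖ * ‖v‖)
    (α : ℝ) (hα : 0 < α) (hcoer : ∀ v : V, α * ‖v‖ ^ 2 ≤ a v v)
    (F : V) (f : V → ℝ) (hf : ∀ v, f v = inner ℝ F v)
    (J J0 : V → ℝ)
    (hJ : ∀ v, J v = (1 / 2) * a v v - f v)
    (hJ0 : ∀ v, J0 v = (1 / 2) * a v v)
    (Vh : Submodule ℝ V) [CompleteSpace Vh]
    (P0 : V → V) (hP0 : ∀ v, P0 v = (Vh.orthogonalProjection v : V))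
    (Vf : Set V) (hVf : Vf = {v : V | P0 v = 0})
    (Rh : V → V)
    (hRh : ∀ vh ∈ Vh, P0 (Rh vh) = vh ∧ ∀ v : V, P0 v = vh → J0 (Rh vh) ≤ J0 v)
    (Ch : ℝ) (hCh : 0 < Ch)
    (happrox : ∀ v ∈ Vf, ‖v‖ ≤ Ch * Real.sqrt (a v v))
    (u : V) (hu : ∀ v : V, J u ≤ J v)
    (uh : V) (huh : uh ∈ Vh) (huhmin : ∀ vh ∈ Vh, J (Rh uh) ≤ J (Rh vh))
    (uhms : V) (huhms : uhms = Rh uh) :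
    Real.sqrt (a (u - uhms) (u - uhms)) ≤ Ch * ‖F‖ := by
  -- nonnegativity of the quadratic form
  have hpos : ∀ v : V, 0 ≤ a v v := fun v => by
    have := hcoer v; nlinarith [sq_nonneg ‖v‖]
  -- Euler equation for u : a u v = ⟪F, v⟫
  have heuler : ∀ v : V, a u v = inner ℝ F v := by
    intro v
    have key : ∀ t : ℝ, 0 ≤ 1 / 2 * t ^ 2 * (a v v) + t * (a u v - inner ℝ F v) := by
      intro t
      have h0 := hu (u + t • v)
      rw [hJ, hJ, hf, hf] at h0
      simp only [map_add, map_smul, LinearMap.add_apply, LinearMap.smul_apply,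
        inner_add_right, real_inner_smul_right, smul_eq_mul] at h0
      rw [hsymm v u] at h0
      ring_nf at h0 ⊢
      linarith
    have := quad_aux (a v v) (a u v - inner ℝ F v) (hpos v) key
    linarith
  -- set w = Rh (P0 u)
  have hmem : P0 u ∈ Vh := by rw [hP0]; exact (Vh.orthogonalProjection u).2
  set w : V := Rh (P0 u) with hw
  obtain ⟨hPw, hwmin⟩ := hRh (P0 u) hmem
  -- Euler for w : a w z = 0 for all z with P0 z = 0
  have heulerw : ∀ z : V, P0 z = 0 → a w z = 0 := by
    intro z hz
    have key : ∀ t : ℝ, 0 ≤ 1 / 2 * t ^ 2 * (a z z) + t * (a w z) := by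
      intro t
      have hPadd : P0 (w + t • z) = P0 u := by
        rw [hP0, map_add, map_smul]
        have h1 : (Vh.orthogonalProjection w : V) = P0 u := by rw [← hP0]; exact hPw
        have h2 : (Vh.orthogonalProjection z : V) = 0 := by rw [← hP0]; exact hz
        push_cast
        rw [h1, h2]; simp
      have h0 := hwmin (w + t • z) hPadd
      rw [hJ0, hJ0] at h0
      simp only [map_add, map_smul, LinearMap.add_apply, LinearMap.smul_apply,
        smul_eq_mul] at h0
      rw [hsymm z w] at h0
      ring_nf at h0 ⊢
      linarith
    have := quad_aux (a z z) (a w z) (hpos z) key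
    linarith
  -- e = u - w lies in Vf
  have hPe : P0 (u - w) = 0 := by
    rw [hP0, map_sub]
    have h1 : (Vh.orthogonalProjection w : V) = (Vh.orthogonalProjection u : V) := by
      rw [← hP0, ← hP0, hPw]
    push_cast
    rw [h1]; simp
  have heVf : u - w ∈ Vf := by rw [hVf]; exact hPe
  -- energy bound for e = u - w
  have hebound : Real.sqrt (a (u - w) (u - w)) ≤ Ch * ‖F‖ := by
    set e : V := u - w with he
    have hae : a e e = inner ℝ F e := by
      have h1 : a e e = a u e - a w e := by
        rw [he]; simp only [map_sub, LinearMap.sub_apply]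
        linarith [hsymm u w]
      rw [h1, heuler e, heulerw e hPe]; ring
    have hle : a e e ≤ ‖F‖ * (Ch * Real.sqrt (a e e)) := by
      calc a e e = inner ℝ F e := hae
        _ ≤ ‖F‖ * ‖e‖ := real_inner_le_norm F e
        _ ≤ ‖F‖ * (Ch * Real.sqrt (a e e)) := by
            apply mul_le_mul_of_nonneg_left (happrox e heVf) (norm_nonneg F)
    set s : ℝ := Real.sqrt (a e e) with hs
    have hs0 : 0 ≤ s := Real.sqrt_nonneg _
    have hs2 : s ^ 2 = a e e := Real.sq_sqrt (hpos e)
    rcases eq_or_lt_of_le hs0 with h | h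
    · rw [← h]; positivity
    · nlinarith [hle, hs2]
  -- J v = J u + ½ a (v-u) (v-u)
  have hgap : ∀ v : V, J v = J u + 1 / 2 * a (v - u) (v - u) := by
    intro v
    rw [hJ, hJ, hf, hf]
    have hx : a (v - u) (v - u) = a v v - 2 * a u v + a u u := by
      simp only [map_sub, LinearMap.sub_apply]
      rw [hsymm v u]; ring
    have he2 : a u v = inner ℝ F v := heuler v
    have he3 : a u u = inner ℝ F u := heuler u
    rw [hx, he2, he3]; ring
  -- compare
  have hcmp : J uhms ≤ J w := by rw [huhms, hw]; exact huhmin (P0 u) hmem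
  have h1 := hgap uhms
  have h2 := hgap w
  have hsq : a (uhms - u) (uhms - u) ≤ a (w - u) (w - u) := by linarith
  have hflip : ∀ x y : V, a (x - y) (x - y) = a (y - x) (y - x) := by
    intro x y
    have : x - y = -(y - x) := by abel
    rw [this]; simp only [map_neg, LinearMap.neg_apply, neg_neg]
  calc Real.sqrt (a (u - uhms) (u - uhms))
      = Real.sqrt (a (uhms - u) (uhms - u)) := by rw [hflip]
    _ ≤ Real.sqrt (a (w - u) (w - u)) := Real.sqrt_le_sqrt hsq
    _ = Real.sqrt (a (u - w) (u - w)) := by rw [hflip]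
    _ ≤ Ch * ‖F‖ := hebound
end

section
/- If u ∈ V solves a(u, v) = f(v) for all v ∈ V (the global variational problem) and u_h ∈ V_h is the minimizer of v_h ↦ J(R(v_h)), then R(u_h) = u, i.e., the exact solution is recovered by reconstruction from the macroscopic minimizer. -/
/-- If `u ∈ V` solves `a(u, v) = f(v)` for all `v ∈ V` and `u_h ∈ V_h`
minimizes `v_h ↦ J(R(v_h))` over `V_h`, then `R(u_h) = u`. -/
theorem stmt9
    {V : Type*} [NormedAddCommGroup V] [InnerProductSpace ℝ V] [CompleteSpace V]
    (a : V →ₗ[ℝ] V →ₗ[ℝ] ℝ)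
    (hsymm : ∀ u v : V, a u v = a v u)
    (M : ℝ) (hcont : ∀ u v : V, |a u v| ≤ M * ‖u‖ * ‖v‖)
    (α : ℝ) (hα : 0 < α) (hcoer : ∀ v : V, α * ‖v‖ ^ 2 ≤ a v v)
    (f : V →L[ℝ] ℝ)
    (J : V → ℝ) (hJ : ∀ v, J v = (1 / 2) * a v v - f v)
    (Vh : Submodule ℝ V) [CompleteSpace Vh]
    (P0 : V → V) (hP0 : ∀ v, P0 v = (Submodule.orthogonalProjectionOnto Vh v : V))
    (R : V → V)
    (hR : ∀ vh ∈ Vh, P0 (R vh) = vh ∧ ∀ v : V, P0 v = vh → J (R vh) ≤ J v)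
    (u : V) (hu : ∀ v : V, a u v = f v)
    (uh : V) (huh : uh ∈ Vh) (huhmin : ∀ vh ∈ Vh, J (R uh) ≤ J (R vh)) :
    R uh = u := by
  have key : ∀ v : V, J v - J u = (1 / 2) * a (v - u) (v - u) := by
    intro v
    have h1 : a (v - u) (v - u) = a v v - a u v - a v u + a u u := by
      simp only [map_sub, LinearMap.sub_apply]; ring
    have h2 := hu v
    have h3 := hu u
    have h4 := hsymm u v
    rw [hJ, hJ, h1]
    linarith
  have hPu : P0 u ∈ Vh := by rw [hP0]; exact (Submodule.orthogonalProjectionOnto Vh u).2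
  have h1 : J (R uh) ≤ J u :=
    le_trans (huhmin _ hPu) ((hR _ hPu).2 u rfl)
  have h2 := hcoer (R uh - u)
  have h3 := key (R uh)
  have h4 : ‖R uh - u‖ ^ 2 ≤ 0 := by nlinarith
  have h5 : ‖R uh - u‖ = 0 := by nlinarith [sq_nonneg ‖R uh - u‖, norm_nonneg (R uh - u)]
  have := norm_eq_zero.mp h5
  exact sub_eq_zero.mp this
end

section
/- Abstract fine-scale stability: if R_f(f) ∈ V_f satisfies a(R_f(f), w) = (F, w) for all w ∈ V_f, and the projection-error estimate ‖v - P_0 v‖ ≤ C h |||v||| holds for all v ∈ V, then |||R_f(f)|||² ≤ C h ‖F‖ |||R_f(f)|||, and hence |||R_f(f)||| ≤ C h ‖F‖. -/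
/-- Abstract fine-scale stability: if `R_f(f) ∈ V_f` satisfies
`a(R_f(f), w) = ⟪F, w⟫` for all `w ∈ V_f`, and `‖v - P₀ v‖ ≤ C h |||v|||` for all `v ∈ V`,
then `|||R_f(f)|||² ≤ C h ‖F‖ |||R_f(f)|||` and hence `|||R_f(f)||| ≤ C h ‖F‖`. -/
theorem stmt18
    {V : Type*} [NormedAddCommGroup V] [InnerProductSpace ℝ V] [CompleteSpace V]
    (a : V →ₗ[ℝ] V →ₗ[ℝ] ℝ)
    (hsymm : ∀ u v : V, a u v = a v u)
    (M : ℝ) (hcont : ∀ u v : V, |a u v| ≤ M * ‖u‖ * ‖v‖)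
    (α : ℝ) (hα : 0 < α) (hcoer : ∀ v : V, α * ‖v‖ ^ 2 ≤ a v v)
    (Vh : Submodule ℝ V) [CompleteSpace Vh]
    (P0 : V → V) (hP0 : ∀ v, P0 v = (Vh.orthogonalProjectionOnto v : V))
    (Vf : Set V) (hVf : Vf = {v : V | P0 v = 0})
    (C h : ℝ) (hC : 0 < C) (hh : 0 < h)
    (happrox : ∀ v : V, ‖v - P0 v‖ ≤ C * h * Real.sqrt (a v v))
    (F : V) (Rff : V) (hRff : Rff ∈ Vf)
    (heq : ∀ w ∈ Vf, a Rff w = inner ℝ F w) :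
    Real.sqrt (a Rff Rff) ^ 2 ≤ C * h * ‖F‖ * Real.sqrt (a Rff Rff) ∧
      Real.sqrt (a Rff Rff) ≤ C * h * ‖F‖ := by
  have hnn : 0 ≤ a Rff Rff :=
    le_trans (by positivity) (hcoer Rff)
  have hP : P0 Rff = 0 := by rw [hVf] at hRff; exact hRff
  have hnorm : ‖Rff‖ ≤ C * h * Real.sqrt (a Rff Rff) := by
    have := happrox Rff
    rwa [hP, sub_zero] at this
  have h1 : a Rff Rff ≤ C * h * ‖F‖ * Real.sqrt (a Rff Rff) := by
    have hy := heq Rff hRff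
    calc a Rff Rff = inner ℝ F Rff := hy
      _ ≤ ‖F‖ * ‖Rff‖ := real_inner_le_norm F Rff
      _ ≤ ‖F‖ * (C * h * Real.sqrt (a Rff Rff)) := by
          exact mul_le_mul_of_nonneg_left hnorm (norm_nonneg F)
      _ = C * h * ‖F‖ * Real.sqrt (a Rff Rff) := by ring
  have hsq : Real.sqrt (a Rff Rff) ^ 2 = a Rff Rff := Real.sq_sqrt hnn
  refine ⟨by rw [hsq]; exact h1, ?_⟩
  rcases eq_or_lt_of_le (Real.sqrt_nonneg (a Rff Rff)) with h0 | h0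
  · rw [← h0]; positivity
  · have := h1
    rw [← hsq] at this
    have := (mul_le_mul_iff_of_pos_right h0).mp (by nlinarith [this] : Real.sqrt (a Rff Rff) * Real.sqrt (a Rff Rff) ≤ (C * h * ‖F‖) * Real.sqrt (a Rff Rff))
    exact this
end
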